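/- Let m ≥ 1 be a natural number and let s be a real number with s > -m. Then Σ_{k=m}^{∞} (2m+s)·Γ(m+s+2+s/m)·Γ(k+s) / (m·Γ(m+s)·Γ(k+s+3+s/m)) = 1, where Γ denotes the Gamma function; that is, the closed-form vertex degree distribution of the L-graph with parameters (m,s) is a probability distribution on {m, m+1, m+2, …}. -/

import Mathlib

/-- Telescoping identity for Gamma ratios. -/
lemma gamma_telescope (x c : ℝ) (hx : 0 < x) (hc : 0 < c) :
    Real.Gamma x / Real.Gamma (x + c) - Real.Gamma (x + 1) / Real.Gamma (x + 1 + c) =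
      c * (Real.Gamma x / Real.Gamma (x + c + 1)) := by
  have h1 : Real.Gamma (x + 1) = x * Real.Gamma x := Real.Gamma_add_one hx.ne'
  have h2 : Real.Gamma (x + c + 1) = (x + c) * Real.Gamma (x + c) :=
    Real.Gamma_add_one (by positivity)
  have h3 : x + 1 + c = x + c + 1 := by ring
  have hgc : 0 < Real.Gamma (x + c) := Real.Gamma_pos_of_pos (by positivity)
  rw [h3, h1, h2]
  field_simp
  ring

/-- The closed-form L-graph vertex degree distribution sums to 1 over
`k = m, m+1, m+2, …`. -/
theorem L_vdd_closed_form_sums_to_one (m : ℕ) (hm : 1 ≤ m) (s : ℝ) (hs : -(m : ℝ) < s) :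
    ∑' n : ℕ,
      (2 * m + s) * Real.Gamma (m + s + 2 + s / m) * Real.Gamma ((m + n : ℕ) + s) /
        (m * Real.Gamma (m + s) * Real.Gamma ((m + n : ℕ) + s + 3 + s / m)) = 1 := by
  have hm0 : (0 : ℝ) < m := by exact_mod_cast hm
  have hsm : -1 < s / m := by
    rw [lt_div_iff₀ hm0]; linarith
  set c : ℝ := 2 + s / m with hc_def
  have hc1 : (1 : ℝ) < c := by simp only [hc_def]; linarith
  have hc0 : (0 : ℝ) < c := by linarith
  have hms : (0 : ℝ) < m + s := by linarith
  have hmc : (m : ℝ) * c = 2 * m + s := by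
    rw [hc_def, mul_add, mul_div_cancel₀ _ hm0.ne']; ring
  have hx : ∀ n : ℕ, (0 : ℝ) < ((m + n : ℕ) : ℝ) + s := by
    intro n
    push_cast
    have : (0 : ℝ) ≤ n := Nat.cast_nonneg n
    linarith
  set g : ℕ → ℝ := fun n => Real.Gamma (((m + n : ℕ) : ℝ) + s) /
      Real.Gamma (((m + n : ℕ) : ℝ) + s + c) with hg_def
  set A : ℝ := (2 * m + s) * Real.Gamma (m + s + 2 + s / m) / (m * Real.Gamma (m + s)) with hA_def
  set f : ℕ → ℝ := fun n =>
      (2 * m + s) * Real.Gamma (m + s + 2 + s / m) * Real.Gamma (((m + n : ℕ) : ℝ) + s) /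
        (m * Real.Gamma (m + s) * Real.Gamma (((m + n : ℕ) : ℝ) + s + 3 + s / m)) with hf_def
  have hG2 : 0 < Real.Gamma ((m : ℝ) + s) := Real.Gamma_pos_of_pos hms
  have hG1 : 0 < Real.Gamma ((m : ℝ) + s + 2 + s / m) := Real.Gamma_pos_of_pos (by linarith)
  have h2ms : (0 : ℝ) < 2 * m + s := by linarith
  have hfg : ∀ n, f n = (A / c) * (g n - g (n + 1)) := by
    intro n
    have hxn := hx n
    have key := gamma_telescope (((m + n : ℕ) : ℝ) + s) c hxn hc0
    have hcast : ((m + (n + 1) : ℕ) : ℝ) + s = ((m + n : ℕ) : ℝ) + s + 1 := by push_cast; ring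
    have hgsub : g n - g (n + 1) =
        c * (Real.Gamma (((m + n : ℕ) : ℝ) + s) / Real.Gamma (((m + n : ℕ) : ℝ) + s + c + 1)) := by
      simp only [hg_def, hcast]
      exact key
    have h3c : ((m + n : ℕ) : ℝ) + s + 3 + s / m = ((m + n : ℕ) : ℝ) + s + c + 1 := by
      simp only [hc_def]; ring
    rw [hgsub, hf_def]
    simp only [h3c]
    have hgam : 0 < Real.Gamma (((m + n : ℕ) : ℝ) + s + c + 1) :=
      Real.Gamma_pos_of_pos (by linarith)
    rw [hA_def]
    generalize Real.Gamma ((m : ℝ) + s + 2 + s / m) = P at *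
    generalize hQ : Real.Gamma ((m : ℝ) + s) = Q at *
    generalize Real.Gamma (((m + n : ℕ) : ℝ) + s) = R at *
    generalize Real.Gamma (((m + n : ℕ) : ℝ) + s + c + 1) = T at *
    field_simp
  have hf_nonneg : ∀ n, 0 ≤ f n := by
    intro n
    have h3 : 0 < Real.Gamma (((m + n : ℕ) : ℝ) + s) := Real.Gamma_pos_of_pos (hx n)
    have h4 : 0 < Real.Gamma (((m + n : ℕ) : ℝ) + s + 3 + s / m) := by
      apply Real.Gamma_pos_of_pos
      have := hx n
      linarith
    simp only [hf_def]
    positivity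
  have hxf : Filter.Tendsto (fun n : ℕ => ((m + n : ℕ) : ℝ) + s) Filter.atTop Filter.atTop := by
    have heq : (fun n : ℕ => ((m + n : ℕ) : ℝ) + s) = fun n : ℕ => (n : ℝ) + ((m : ℝ) + s) := by
      funext n; push_cast; ring
    rw [heq]
    exact Filter.tendsto_atTop_add_const_right _ _ tendsto_natCast_atTop_atTop
  have hg_tendsto : Filter.Tendsto g Filter.atTop (nhds 0) := by
    have hub : Filter.Tendsto (fun n : ℕ => (((m + n : ℕ) : ℝ) + s)⁻¹)
        Filter.atTop (nhds 0) := hxf.inv_tendsto_atTop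
    apply squeeze_zero' ?_ ?_ hub
    · filter_upwards with n
      have h3 : 0 < Real.Gamma (((m + n : ℕ) : ℝ) + s) := Real.Gamma_pos_of_pos (hx n)
      have h4 : 0 < Real.Gamma (((m + n : ℕ) : ℝ) + s + c) :=
        Real.Gamma_pos_of_pos (by have := hx n; linarith)
      simp only [hg_def]
      positivity
    · filter_upwards [hxf.eventually_ge_atTop 2] with n h2n
      simp only [hg_def]
      set x : ℝ := ((m + n : ℕ) : ℝ) + s with hxdef
      have hxpos : 0 < x := hx n
      have h3 : 0 < Real.Gamma x := Real.Gamma_pos_of_pos hxpos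
      have hmono : Real.Gamma (x + 1) ≤ Real.Gamma (x + c) := by
        apply le_of_lt
        apply Real.Gamma_strictMonoOn_Ici (by simp only [Set.mem_Ici]; linarith)
          (by simp only [Set.mem_Ici]; linarith) (by linarith)
      have hG1' : Real.Gamma (x + 1) = x * Real.Gamma x := Real.Gamma_add_one hxpos.ne'
      have h5 : 0 < Real.Gamma (x + 1) := Real.Gamma_pos_of_pos (by linarith)
      have hle : Real.Gamma x / Real.Gamma (x + c) ≤ Real.Gamma x / Real.Gamma (x + 1) :=
        div_le_div_of_nonneg_left h3.le h5 hmono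
      have heq : Real.Gamma x / Real.Gamma (x + 1) = x⁻¹ := by
        rw [hG1']
        field_simp
      exact heq ▸ hle
  have hpartial : ∀ n : ℕ, ∑ i ∈ Finset.range n, f i = (A / c) * (g 0 - g n) := by
    intro n
    calc ∑ i ∈ Finset.range n, f i = ∑ i ∈ Finset.range n, (A / c) * (g i - g (i + 1)) :=
          Finset.sum_congr rfl fun i _ => hfg i
      _ = (A / c) * ∑ i ∈ Finset.range n, (g i - g (i + 1)) := by rw [Finset.mul_sum]
      _ = (A / c) * (g 0 - g n) := by rw [Finset.sum_range_sub' g n]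
  have hval : (A / c) * (g 0 - 0) = 1 := by
    have hg0 : g 0 = Real.Gamma ((m : ℝ) + s) / Real.Gamma ((m : ℝ) + s + c) := by
      simp only [hg_def]
      norm_num
    have heqc : (m : ℝ) + s + 2 + s / m = (m : ℝ) + s + c := by
      rw [hc_def]; ring
    have hG : 0 < Real.Gamma ((m : ℝ) + s + c) := Real.Gamma_pos_of_pos (by linarith)
    rw [sub_zero, hg0, hA_def, heqc]
    generalize hGG : Real.Gamma ((m : ℝ) + s + c) = G at *
    generalize hQQ : Real.Gamma ((m : ℝ) + s) = Q at *
    rw [hc_def]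
    field_simp
  have hsum : HasSum f 1 := by
    rw [hasSum_iff_tendsto_nat_of_nonneg hf_nonneg]
    have h1 : Filter.Tendsto (fun n : ℕ => (A / c) * (g 0 - g n)) Filter.atTop
        (nhds ((A / c) * (g 0 - 0))) :=
      Filter.Tendsto.const_mul _ (tendsto_const_nhds.sub hg_tendsto)
    rw [hval] at h1
    exact h1.congr fun n => (hpartial n).symm
  exact hsum.tsum_eq
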